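/- arXiv:2604.08554 — 5 statements merged into one kernel-verified Lean document; each statement's English description precedes it below -/
import Mathlib

section
/- For every alphabet size s ≥ 2 and every n ≥ 1 there exists a cyclic word w of length s^n over an alphabet Σ of size s whose s^n cyclic length-n windows are exactly the s^n distinct n-grams over Σ, each appearing exactly once (a cyclic de Bruijn word of order n). Moreover, any such cyclic word has primitive period exactly s^n. -/
/-!
Cyclic de Bruijn words.  A cyclic word of length `N` over `σ` is modelled as a
function `w : ℕ → σ` satisfying `w (i + N) = w i` for all `i`; its cyclic length-`n`
windows are the strings `w i, w (i+1), …, w (i+n−1)` for `i < N`.  The primitive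
period of `w` is the least `d ≥ 1` with `w (i + d) = w i` for all `i`.
-/

open List

section Euler

variable {E : Type*} {V : Type*} [DecidableEq E] [DecidableEq V] (s t : E → V)
set_option linter.unusedSectionVars false

lemma trail_count (v : V) :
    ∀ (l : List E) (hne : l ≠ []), l.Chain' (fun a b => t a = s b) →
      l.countP (fun e => s e = v) + (if t (l.getLast hne) = v then 1 else 0)
        = l.countP (fun e => t e = v) + (if s (l.head hne) = v then 1 else 0) := by
  intro l
  induction l with
  | nil => intro h; exact absurd rfl h
  | cons a l ih =>
    intro hne hch
    cases l with
    | nil =>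
      simp only [List.countP_cons, List.countP_nil, List.getLast_singleton,
        List.head_cons]
      by_cases h1 : s a = v <;> by_cases h2 : t a = v <;> simp [h1, h2]
    | cons b l' =>
      have hlink : t a = s b := (List.isChain_cons_cons.mp hch).1
      have ih2 := ih (List.cons_ne_nil b l') (List.isChain_cons_cons.mp hch).2
      simp only [List.head_cons] at ih2 ⊢
      rw [List.getLast_cons (List.cons_ne_nil b l')]
      simp only [List.countP_cons]
      by_cases h1 : s a = v <;> by_cases h2 : t a = v <;>
        by_cases h3 : s b = v <;>
        (try simp [List.countP_cons, h3, hlink ▸ h3] at ih2) <;> simp [List.countP_cons, h1, h2, h3] <;> first | omega | (rw [hlink] at h2; tauto)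

variable [Fintype E]

set_option linter.unusedSectionVars false in
lemma closed_of_maximal (S : Finset E)
    (hbal : ∀ v, (S.filter fun e => s e = v).card = (S.filter fun e => t e = v).card)
    (l : List E) (hne : l ≠ []) (hnd : l.Nodup)
    (hch : l.Chain' fun a b => t a = s b)
    (hsub : ∀ e ∈ l, e ∈ S)
    (hmax : ∀ e ∈ S, e ∉ l → t (l.getLast hne) ≠ s e) :
    t (l.getLast hne) = s (l.head hne) := by
  set u := t (l.getLast hne) with hu
  have key := trail_count s t u l hne hch
  have h1 : l.countP (fun e => s e = u) = (S.filter fun e => s e = u).card := by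
    have hset : (S.filter fun e => s e = u) = (l.filter fun e => s e = u).toFinset := by
      ext e
      simp only [Finset.mem_filter, List.mem_toFinset, List.mem_filter, decide_eq_true_eq]
      constructor
      · rintro ⟨heS, heu⟩
        refine ⟨by_contra fun h => hmax e heS h heu.symm, heu⟩
      · rintro ⟨hel, heu⟩
        exact ⟨hsub e hel, heu⟩
    rw [hset, List.toFinset_card_of_nodup (hnd.filter _), List.countP_eq_length_filter]
  have h2 : l.countP (fun e => t e = u) ≤ (S.filter fun e => t e = u).card := by
    have hsub2 : (l.filter fun e => t e = u).toFinset ⊆ (S.filter fun e => t e = u) := by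
      intro e he
      simp only [List.mem_toFinset, List.mem_filter, decide_eq_true_eq] at he
      exact Finset.mem_filter.mpr ⟨hsub e he.1, he.2⟩
    calc l.countP (fun e => t e = u) = (l.filter fun e => t e = u).toFinset.card := by
          rw [List.toFinset_card_of_nodup (hnd.filter _), List.countP_eq_length_filter]
      _ ≤ _ := Finset.card_le_card hsub2
  by_cases hh : s (l.head hne) = u
  · exact hh.symm
  · exfalso
    rw [if_pos rfl, if_neg hh] at key
    have := hbal u
    omega

lemma exists_closed_trail_from (S : Finset E)
    (hbal : ∀ v, (S.filter fun e => s e = v).card = (S.filter fun e => t e = v).card) :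
    ∀ (k : ℕ) (l : List E) (hne : l ≠ []), l.Nodup →
      l.Chain' (fun a b => t a = s b) → (∀ e ∈ l, e ∈ S) →
      S.card - l.length ≤ k →
      ∃ (m : List E) (hm : m ≠ []), m.Nodup ∧ m.Chain' (fun a b => t a = s b) ∧
        (∀ e ∈ m, e ∈ S) ∧ m.head hm = l.head hne ∧ t (m.getLast hm) = s (m.head hm) := by
  intro k
  induction k with
  | zero =>
    intro l hne hnd hch hsub hk
    have hfull : ∀ e ∈ S, e ∈ l := by
      intro e heS
      have h1 : l.toFinset ⊆ S := fun x hx => hsub x (List.mem_toFinset.mp hx)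
      have h2 : S.card ≤ l.toFinset.card := by
        rw [List.toFinset_card_of_nodup hnd]; omega
      have := Finset.eq_of_subset_of_card_le h1 h2
      rw [← this] at heS
      exact List.mem_toFinset.mp heS
    refine ⟨l, hne, hnd, hch, hsub, rfl, ?_⟩
    exact closed_of_maximal s t S hbal l hne hnd hch hsub
      (fun e heS hel => absurd (hfull e heS) hel)
  | succ k ih =>
    intro l hne hnd hch hsub hk
    by_cases hext : ∃ e ∈ S, e ∉ l ∧ t (l.getLast hne) = s e
    · obtain ⟨e, heS, hel, hte⟩ := hext
      have hne' : l ++ [e] ≠ [] := by simp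
      have hnd' : (l ++ [e]).Nodup := by
        rw [List.nodup_append]
        exact ⟨hnd, List.nodup_singleton e, by intro a ha b hb; simp only [List.mem_singleton] at hb; subst hb; exact fun h => hel (h ▸ ha)⟩
      have hch' : (l ++ [e]).Chain' (fun a b => t a = s b) := by
        refine hch.append (List.isChain_singleton e) ?_
        intro x hx y hy
        rw [List.getLast?_eq_getLast_of_ne_nil hne] at hx
        simp only [List.head?_cons, Option.mem_some_iff] at hx hy
        rw [← hx, ← hy]; exact hte
      have hsub' : ∀ f ∈ l ++ [e], f ∈ S := by
        intro f hf
        rcases List.mem_append.mp hf with h | h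
        · exact hsub f h
        · simp only [List.mem_singleton] at h
          exact h ▸ heS
      have hlt : l.length < S.card := by
        have h1 : l.toFinset ⊂ S := by
          refine Finset.ssubset_iff_of_subset (fun x hx => hsub x (List.mem_toFinset.mp hx)) |>.mpr ?_
          exact ⟨e, heS, fun h => hel (List.mem_toFinset.mp h)⟩
        have := Finset.card_lt_card h1
        rwa [List.toFinset_card_of_nodup hnd] at this
      have hk' : S.card - (l ++ [e]).length ≤ k := by
        simp only [List.length_append, List.length_singleton]; omega
      obtain ⟨m, hm, h1, h2, h3, h4, h5⟩ := ih (l ++ [e]) hne' hnd' hch' hsub' hk'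
      refine ⟨m, hm, h1, h2, h3, ?_, h5⟩
      rwa [List.head_append_left hne] at h4
    · push_neg at hext
      refine ⟨l, hne, hnd, hch, hsub, rfl, ?_⟩
      exact closed_of_maximal s t S hbal l hne hnd hch hsub
        (fun f hfS hfl => hext f hfS hfl)

lemma getLast_cast {l1 l2 : List E} (h : l1 = l2) (h1 : l1 ≠ []) :
    l1.getLast h1 = l2.getLast (h ▸ h1) := by subst h; rfl

lemma head_cast {l1 l2 : List E} (h : l1 = l2) (h1 : l1 ≠ []) :
    l1.head h1 = l2.head (h ▸ h1) := by subst h; rfl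

lemma card_toFinset_filter (l : List E) (hnd : l.Nodup) (p : E → Prop) [DecidablePred p] :
    (l.toFinset.filter p).card = l.countP (fun e => decide (p e)) := by
  rw [List.countP_eq_length_filter, ← List.toFinset_card_of_nodup (hnd.filter _)]
  congr 1
  ext e
  simp [List.mem_filter]

lemma closed_trail_rotate (A B : List E) (hA : A ≠ [])
    (hnd : (A ++ B).Nodup)
    (hch : (A ++ B).Chain' (fun a b => t a = s b))
    (hAB : A ++ B ≠ [])
    (hcl : t ((A ++ B).getLast hAB) = s ((A ++ B).head hAB)) :
    ∃ hBA : B ++ A ≠ [], (B ++ A).Nodup ∧ (B ++ A).Chain' (fun a b => t a = s b) ∧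
      t ((B ++ A).getLast hBA) = s ((B ++ A).head hBA) := by
  rcases eq_or_ne B [] with rfl | hB
  · rw [getLast_cast (List.append_nil A) hAB, head_cast (List.append_nil A) hAB] at hcl
    refine ⟨by simpa using hA, by simpa using hnd, by simpa using hch, ?_⟩
    simp only [List.nil_append]
    exact hcl
  · have hBA : B ++ A ≠ [] := fun h => hB (List.append_eq_nil_iff.mp h).1
    obtain ⟨hchA, hchB, hlink⟩ := List.isChain_append.mp hch
    have hlink' : t (A.getLast hA) = s (B.head hB) := by
      apply hlink
      · rw [List.getLast?_eq_getLast_of_ne_nil hA]; rfl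
      · rw [List.head?_eq_head hB]; rfl
    have hndBA : (B ++ A).Nodup := List.perm_append_comm.nodup hnd
    have hchBA : (B ++ A).Chain' (fun a b => t a = s b) := by
      refine List.isChain_append.mpr ⟨hchB, hchA, ?_⟩
      intro x hx y hy
      rw [List.getLast?_eq_getLast_of_ne_nil hB, Option.mem_some_iff] at hx
      rw [List.head?_eq_head hA, Option.mem_some_iff] at hy
      subst hx hy
      rw [← List.getLast_append_of_ne_nil (l := A) (by simp [hB]) hB, ← List.head_append_left (l₂ := B) hA]
      exact hcl
    refine ⟨hBA, hndBA, hchBA, ?_⟩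
    rw [List.getLast_append_of_ne_nil _ hA, List.head_append_left (l₂ := A) hB]
    exact hlink'

lemma euler_exists [Nonempty E]
    (hbal : ∀ v, (Finset.univ.filter fun e => s e = v).card
      = (Finset.univ.filter fun e => t e = v).card)
    (hconn : ∀ a b : E, Relation.ReflTransGen (fun a b => t a = s b) a b) :
    ∃ (l : List E) (hl : l ≠ []), l.Nodup ∧ l.Chain' (fun a b => t a = s b) ∧
      t (l.getLast hl) = s (l.head hl) ∧ ∀ e : E, e ∈ l := by
  have claim : ∀ (k : ℕ) (l : List E) (hl : l ≠ []), l.Nodup →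
      l.Chain' (fun a b => t a = s b) →
      t (l.getLast hl) = s (l.head hl) →
      Fintype.card E - l.length ≤ k →
      ∃ (m : List E) (hm : m ≠ []), m.Nodup ∧ m.Chain' (fun a b => t a = s b) ∧
        t (m.getLast hm) = s (m.head hm) ∧ ∀ e : E, e ∈ m := by
    intro k
    induction k with
    | zero =>
      intro l hl hnd hch hcl hk
      refine ⟨l, hl, hnd, hch, hcl, ?_⟩
      intro e
      have h1 : l.toFinset.card = l.length := List.toFinset_card_of_nodup hnd
      have h2 : l.length ≤ Fintype.card E := hnd.length_le_card
      have : l.toFinset = Finset.univ := by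
        apply Finset.eq_univ_of_card
        rw [h1]; omega
      rw [← List.mem_toFinset, this]; exact Finset.mem_univ e
    | succ k ih =>
      intro l hl hnd hch hcl hk
      by_cases hfull : ∀ e : E, e ∈ l
      · exact ⟨l, hl, hnd, hch, hcl, hfull⟩
      push_neg at hfull
      obtain ⟨f, hf⟩ := hfull
      -- the set of unused edges, still balanced
      set U : Finset E := Finset.univ \ l.toFinset with hU
      have hcnt : ∀ v, l.countP (fun e => s e = v) = l.countP (fun e => t e = v) := by
        intro v
        have key := trail_count s t v l hl hch
        rw [hcl] at key
        omega
      have hbalU : ∀ v, (U.filter fun e => s e = v).card = (U.filter fun e => t e = v).card := by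
        intro v
        have key1 : (U.filter fun e => s e = v).card
            = (Finset.univ.filter fun e => s e = v).card
              - (l.toFinset.filter fun e => s e = v).card := by
          rw [show U.filter (fun e => s e = v)
              = (Finset.univ.filter fun e => s e = v) \ (l.toFinset.filter fun e => s e = v) from by
            ext e
            simp only [hU, Finset.mem_filter, Finset.mem_sdiff, Finset.mem_univ, true_and]
            tauto]
          exact Finset.card_sdiff_of_subset (Finset.filter_subset_filter _ (Finset.subset_univ _))
        have key2 : (U.filter fun e => t e = v).card
            = (Finset.univ.filter fun e => t e = v).card
              - (l.toFinset.filter fun e => t e = v).card := by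
          rw [show U.filter (fun e => t e = v)
              = (Finset.univ.filter fun e => t e = v) \ (l.toFinset.filter fun e => t e = v) from by
            ext e
            simp only [hU, Finset.mem_filter, Finset.mem_sdiff, Finset.mem_univ, true_and]
            tauto]
          exact Finset.card_sdiff_of_subset (Finset.filter_subset_filter _ (Finset.subset_univ _))
        rw [key1, key2, hbal v, card_toFinset_filter l hnd, card_toFinset_filter l hnd, hcnt v]
      -- find an unused edge whose source is a vertex visited by l
      have hfind : ∃ u, u ∉ l ∧ ∃ e ∈ l, t e = s u := by
        have hstart : l.head hl ∈ l := List.head_mem hl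
        have hreach := hconn (l.head hl) f
        clear hcl hch hnd
        induction hreach with
        | refl => exact absurd hstart hf
        | @tail b c hab hbc ih2 =>
          by_cases hbl : b ∈ l
          · exact ⟨c, hf, b, hbl, hbc⟩
          · exact ih2 hbl
      obtain ⟨u, hu, e, hel, hte⟩ := hfind
      obtain ⟨T1, T2, hsplit⟩ := List.append_of_mem hel
      have hsplit' : l = (T1 ++ [e]) ++ T2 := by rw [hsplit]; simp
      have hA : T1 ++ [e] ≠ [] := by simp
      have hndl : ((T1 ++ [e]) ++ T2).Nodup := hsplit' ▸ hnd
      have hchl : ((T1 ++ [e]) ++ T2).Chain' (fun a b => t a = s b) := hsplit' ▸ hch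
      have hABne : (T1 ++ [e]) ++ T2 ≠ [] := hsplit' ▸ hl
      have hcll : t (((T1 ++ [e]) ++ T2).getLast hABne)
          = s (((T1 ++ [e]) ++ T2).head hABne) := by
        have e1 := getLast_cast hsplit' hl
        have e2 := head_cast hsplit' hl
        rw [e1, e2] at hcl
        exact hcl
      obtain ⟨hBA, hndr, hchr, hclr⟩ :=
        closed_trail_rotate s t (T1 ++ [e]) T2 hA hndl hchl hABne hcll
      set L := T2 ++ (T1 ++ [e]) with hLdef
      have hlast : L.getLast hBA = e := by
        rw [getLast_cast hLdef hBA, List.getLast_append_of_ne_nil _ hA]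
        exact List.getLast_append_singleton T1
      have hmemL : ∀ x, x ∈ L ↔ x ∈ l := by
        intro x
        rw [hsplit']
        exact (List.perm_append_comm).mem_iff
      -- a closed trail through u in the unused edges
      have huU : u ∈ U := by
        simp only [hU, Finset.mem_sdiff, Finset.mem_univ, true_and, List.mem_toFinset]
        exact hu
      obtain ⟨C, hC, hndC, hchC, hsubC, hheadC, hclC⟩ :=
        exists_closed_trail_from s t U hbalU U.card [u] (by simp)
          (List.nodup_singleton u) (List.isChain_singleton u)
          (by intro x hx; simp only [List.mem_singleton] at hx; exact hx ▸ huU)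
          (by omega)
      rw [List.head_cons] at hheadC
      have hCnotl : ∀ x ∈ C, x ∉ l := by
        intro x hx
        have := hsubC x hx
        simp only [hU, Finset.mem_sdiff, Finset.mem_univ, true_and,
          List.mem_toFinset] at this
        exact this
      -- splice
      have hMne : L ++ C ≠ [] := fun h => hC (List.append_eq_nil_iff.mp h).2
      have hndM : (L ++ C).Nodup := by
        rw [List.nodup_append]
        exact ⟨hndr, hndC, fun x hxL y hyC hxy => hCnotl y hyC ((hmemL y).mp (hxy ▸ hxL))⟩
      have hchM : (L ++ C).Chain' (fun a b => t a = s b) := by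
        refine List.isChain_append.mpr ⟨hchr, hchC, ?_⟩
        intro x hx y hy
        rw [List.getLast?_eq_getLast_of_ne_nil hBA, Option.mem_some_iff] at hx
        rw [List.head?_eq_head hC, Option.mem_some_iff] at hy
        subst hx hy
        rw [hlast, hheadC]
        exact hte
      have hclM : t ((L ++ C).getLast hMne) = s ((L ++ C).head hMne) := by
        rw [List.getLast_append_of_ne_nil _ hC, List.head_append_left hBA]
        rw [hclC, hheadC, ← hte, ← hlast]
        exact hclr
      have hkM : Fintype.card E - (L ++ C).length ≤ k := by
        have c1 : 0 < C.length := List.length_pos_iff.mpr hC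
        have c2 : L.length = l.length := by
          rw [hsplit', hLdef]
          simp only [List.length_append]
          omega
        simp only [List.length_append]
        omega
      exact ih (L ++ C) hMne hndM hchM hclM hkM
  obtain ⟨e0⟩ := ‹Nonempty E›
  obtain ⟨T, hT, h1, h2, h3, h4, h5⟩ :=
    exists_closed_trail_from s t Finset.univ hbal Finset.univ.card [e0] (by simp)
      (List.nodup_singleton e0) (List.isChain_singleton e0) (by simp) (by omega)
  exact claim (Fintype.card E) T hT h1 h2 h5 (by omega)

end Euler

section DeBruijn

variable {σ : Type*} [Fintype σ] [DecidableEq σ] {n : ℕ}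

/-- Source of an `n`-gram edge: its first `n-1` letters. -/
def dbs (hn : 1 ≤ n) (e : Fin n → σ) : Fin (n - 1) → σ :=
  fun i => e ⟨i.1, by have := i.isLt; omega⟩

/-- Target of an `n`-gram edge: its last `n-1` letters. -/
def dbt (hn : 1 ≤ n) (e : Fin n → σ) : Fin (n - 1) → σ :=
  fun i => e ⟨i.1 + 1, by have := i.isLt; omega⟩

lemma dbs_card (hn : 1 ≤ n) (v : Fin (n - 1) → σ) :
    (Finset.univ.filter fun e : Fin n → σ => dbs hn e = v).card = Fintype.card σ := by
  rw [← Fintype.card_subtype]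
  refine Fintype.card_congr ⟨fun e => e.1 ⟨n - 1, by omega⟩,
    fun c => ⟨fun i => if h : i.1 < n - 1 then v ⟨i.1, h⟩ else c, ?_⟩, ?_, ?_⟩
  · funext i
    simp only [dbs, Fin.val_mk]
    rw [dif_pos i.isLt]
  · rintro ⟨e, he⟩
    ext i
    simp only []
    by_cases h : i.1 < n - 1
    · rw [dif_pos h]
      have := congrFun he ⟨i.1, h⟩
      simp only [dbs, Fin.val_mk] at this
      rw [← this]
    · rw [dif_neg h]
      have hi := i.isLt
      exact congrArg e (Fin.ext (show n - 1 = (i : ℕ) by omega))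
  · intro c
    simp

lemma dbt_card (hn : 1 ≤ n) (v : Fin (n - 1) → σ) :
    (Finset.univ.filter fun e : Fin n → σ => dbt hn e = v).card = Fintype.card σ := by
  rw [← Fintype.card_subtype]
  refine Fintype.card_congr ⟨fun e => e.1 ⟨0, by omega⟩,
    fun c => ⟨fun i => if h : 0 < i.1 then v ⟨i.1 - 1, by have := i.isLt; omega⟩ else c, ?_⟩,
    ?_, ?_⟩
  · funext i
    simp only [dbt, Fin.val_mk]
    rw [dif_pos (Nat.succ_pos _)]
    exact congrArg v (Fin.ext (show (i : ℕ) + 1 - 1 = i by omega))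
  · rintro ⟨e, he⟩
    ext i
    simp only []
    by_cases h : 0 < i.1
    · rw [dif_pos h]
      have := congrFun he ⟨i.1 - 1, by have := i.isLt; omega⟩
      simp only [dbt, Fin.val_mk] at this
      rw [← this]
      exact congrArg e (Fin.ext (show (i : ℕ) - 1 + 1 = i by omega))
    · rw [dif_neg h]
      exact congrArg e (Fin.ext (show (0 : ℕ) = i by omega))
  · intro c
    simp

lemma db_conn (hn : 1 ≤ n) (a b : Fin n → σ) :
    Relation.ReflTransGen (fun x y => dbt hn x = dbs hn y) a b := by
  set c : ℕ → (Fin n → σ) := fun j i =>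
    if h : i.1 + j < n then a ⟨i.1 + j, h⟩
    else if h2 : i.1 + j - n < n then b ⟨i.1 + j - n, h2⟩ else b ⟨0, by omega⟩ with hc
  have ha : ∀ (x y : ℕ) (hx : x < n) (hy : y < n), x = y → a ⟨x, hx⟩ = a ⟨y, hy⟩ := by
    rintro x y hx hy rfl; rfl
  have hb : ∀ (x y : ℕ) (hx : x < n) (hy : y < n), x = y → b ⟨x, hx⟩ = b ⟨y, hy⟩ := by
    rintro x y hx hy rfl; rfl
  have hc0 : c 0 = a := by
    funext i
    simp only [hc]
    rw [dif_pos (by have := i.isLt; omega)]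
    exact ha _ _ _ i.isLt (by omega)
  have hcn : c n = b := by
    funext i
    have hi := i.isLt
    simp only [hc]
    rw [dif_neg (by omega), dif_pos (by omega)]
    exact hb _ _ _ i.isLt (by omega)
  have hstep : ∀ j, j < n → dbt hn (c j) = dbs hn (c (j + 1)) := by
    intro j hj
    funext i
    have hi := i.isLt
    simp only [dbt, dbs, hc]
    split_ifs <;>
      first
        | exact ha _ _ _ _ (by omega)
        | exact hb _ _ _ _ (by omega)
        | (exfalso; omega)
  have key : ∀ j, j ≤ n → Relation.ReflTransGen (fun x y => dbt hn x = dbs hn y) a (c j) := by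
    intro j
    induction j with
    | zero => intro _; rw [hc0]
    | succ j ih =>
      intro hj
      exact Relation.ReflTransGen.tail (ih (by omega)) (hstep j (by omega))
  have := key n le_rfl
  rwa [hcn] at this

end DeBruijn


/-- For every alphabet of size `s ≥ 2` and every `n ≥ 1` there exists
a cyclic word `w` of length `s^n` whose `s^n` cyclic length-`n` windows are exactly the
`s^n` distinct `n`-grams, each appearing exactly once (a cyclic de Bruijn word of
order `n`).  Moreover, any such cyclic word has primitive period exactly `s^n`:
`s^n` is a period, and every period `d ≥ 1` satisfies `s^n ≤ d`. -/
theorem deBruijn_word_exists_and_primitive_period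
    (σ : Type*) [Fintype σ] [DecidableEq σ] (n : ℕ) (hn : 1 ≤ n)
    (hs : 2 ≤ Fintype.card σ) :
    (∃ w : ℕ → σ,
      (∀ i, w (i + Fintype.card σ ^ n) = w i) ∧
      (∀ g : Fin n → σ, ∃! i, i < Fintype.card σ ^ n ∧
        ∀ t : Fin n, w (i + (t : ℕ)) = g t)) ∧
    (∀ w : ℕ → σ,
      (∀ i, w (i + Fintype.card σ ^ n) = w i) →
      (∀ g : Fin n → σ, ∃! i, i < Fintype.card σ ^ n ∧
        ∀ t : Fin n, w (i + (t : ℕ)) = g t) →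
      ∀ d : ℕ, 0 < d → (∀ i, w (i + d) = w i) → Fintype.card σ ^ n ≤ d) := by
  classical
  set N := Fintype.card σ ^ n with hN
  have hNpos : 0 < N := pow_pos (by omega) n
  have hN2 : 1 < N := hN ▸ Nat.one_lt_pow (by omega) (by omega)
  constructor
  · -- existence
    have hE : Fintype.card (Fin n → σ) = N := by
      rw [hN, Fintype.card_fun, Fintype.card_fin]
    have hσne : Nonempty σ := Fintype.card_pos_iff.mp (by omega)
    have hEne : Nonempty (Fin n → σ) := ⟨fun _ => Classical.arbitrary σ⟩
    obtain ⟨l, hl, hnd, hch, hcl, hmem⟩ :=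
      euler_exists (E := Fin n → σ) (V := Fin (n - 1) → σ) (dbs hn) (dbt hn)
        (fun v => by rw [dbs_card hn v, dbt_card hn v]) (db_conn hn)
    have hlen : l.length = N := by
      have h1 : l.toFinset = Finset.univ :=
        Finset.eq_univ_iff_forall.mpr (fun e => List.mem_toFinset.mpr (hmem e))
      have h2 := List.toFinset_card_of_nodup hnd
      rw [h1, Finset.card_univ, hE] at h2
      omega
    have hgetlt : ∀ i : ℕ, i % N < l.length := fun i => by
      rw [hlen]; exact Nat.mod_lt _ hNpos
    set f : ℕ → (Fin n → σ) := fun i => l.get ⟨i % N, hgetlt i⟩ with hf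
    have get_cast : ∀ (x y : ℕ) (hx : x < l.length) (hy : y < l.length), x = y →
        l.get ⟨x, hx⟩ = l.get ⟨y, hy⟩ := by rintro x y hx hy rfl; rfl
    -- f is periodic
    have hfper : ∀ i, f (i + N) = f i := by
      intro i
      show l.get ⟨(i + N) % N, hgetlt _⟩ = l.get ⟨i % N, hgetlt _⟩
      exact get_cast _ _ _ _ (by rw [Nat.add_mod_right])
    -- consecutive edges are compatible
    have hstep : ∀ i, dbt hn (f i) = dbs hn (f (i + 1)) := by
      intro i
      have hmod : i % N < N := Nat.mod_lt _ hNpos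
      show dbt hn (l.get ⟨i % N, hgetlt i⟩) = dbs hn (l.get ⟨(i + 1) % N, hgetlt (i + 1)⟩)
      by_cases h : i % N + 1 < N
      · have hidx : (i + 1) % N = i % N + 1 := by
          conv_lhs => rw [Nat.add_mod]
          rw [Nat.mod_eq_of_lt hN2, Nat.mod_eq_of_lt h]
        have hcg := (List.isChain_iff_getElem.mp hch) (i % N) (by omega)
        rw [get_cast ((i + 1) % N) (i % N + 1) (hgetlt _) (by omega) hidx]
        exact hcg
      · -- wrap around
        have hlast : i % N = N - 1 := by omega
        have hidx : (i + 1) % N = 0 := by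
          conv_lhs => rw [Nat.add_mod]
          rw [Nat.mod_eq_of_lt hN2, hlast,
            Nat.sub_add_cancel (by omega), Nat.mod_self]
        rw [get_cast (i % N) (l.length - 1) (hgetlt _) (by omega) (by omega),
          get_cast ((i + 1) % N) 0 (hgetlt _) (by omega) hidx]
        have e : l.get ⟨l.length - 1, by omega⟩ = l.getLast hl := (List.getLast_eq_getElem hl).symm
        rw [e, List.get_mk_zero]
        exact hcl
    set w : ℕ → σ := fun i => f i ⟨0, by omega⟩ with hw
    have hwin : ∀ (m i : ℕ) (j : ℕ) (hjm : j + m < n),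
        f (i + m) ⟨j, by omega⟩ = f i ⟨j + m, hjm⟩ := by
      intro m
      induction m with
      | zero => intro i j hjm; exact congrArg (f i) (Fin.ext rfl)
      | succ m ih =>
        intro i j hjm
        have h1 : i + (m + 1) = (i + 1) + m := by omega
        rw [show f (i + (m + 1)) = f ((i + 1) + m) from by rw [h1]]
        have h2 := ih (i + 1) j (by omega)
        rw [h2]
        have h3 := congrFun (hstep i) ⟨j + m, by omega⟩
        simp only [dbs, dbt, Fin.val_mk] at h3
        rw [← h3]
        exact congrArg (f i) (Fin.ext (by simp only [Fin.val_mk]; omega))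
    have hwc : ∀ (i : ℕ) (t : Fin n), w (i + (t : ℕ)) = f i t := by
      intro i t
      have h0 := hwin (t : ℕ) i 0 (by have := t.isLt; omega)
      show f (i + (t : ℕ)) ⟨0, by omega⟩ = f i t
      rw [h0]
      exact congrArg (f i) (Fin.ext (by simp only [Fin.val_mk]; omega))
    refine ⟨w, fun i => ?_, ?_⟩
    · show f (i + N) ⟨0, by omega⟩ = f i ⟨0, by omega⟩
      rw [hfper i]
    intro g
    obtain ⟨k, hk⟩ := List.mem_iff_get.mp (hmem g)
    have hfk : f (k : ℕ) = l.get k := by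
      show l.get ⟨(k : ℕ) % N, hgetlt _⟩ = l.get k
      have : l.get ⟨(k : ℕ), k.isLt⟩ = l.get k := congrArg l.get (Fin.ext rfl)
      rw [← this]
      exact get_cast _ _ _ _ (Nat.mod_eq_of_lt (k.isLt.trans_eq hlen))
    refine ⟨(k : ℕ), ⟨by rw [← hlen]; exact k.isLt, ?_⟩, ?_⟩
    · intro t
      rw [hwc, hfk, hk]
    · intro j hj
      obtain ⟨hjN, hjwin⟩ := hj
      have hfj : f j = g := by
        funext t
        rw [← hwc j t]
        exact hjwin t
      have hj' : f j = l.get ⟨j, by omega⟩ := by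
        show l.get ⟨j % N, hgetlt _⟩ = l.get ⟨j, by omega⟩
        exact get_cast _ _ _ _ (Nat.mod_eq_of_lt (by omega))
      have hgg : l.get ⟨j, by omega⟩ = l.get k := by
        rw [← hj', hfj, ← hk]
      have := (hnd.get_inj_iff).mp hgg
      have := congrArg Fin.val this
      simpa using this
  · -- minimality of the period
    intro w hper hwin d hd hperd
    by_contra hlt
    push_neg at hlt
    obtain ⟨i0, hi0, huniq⟩ := hwin (fun t => w (t : ℕ))
    have e1 : (0 : ℕ) = i0 := huniq 0 ⟨hNpos, fun t => by rw [Nat.zero_add]⟩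
    have e2 : d = i0 := by
      refine huniq d ⟨hlt, fun t => ?_⟩
      rw [Nat.add_comm d (t : ℕ)]
      exact hperd (t : ℕ)
    omega
end

section
/- Let ρ be a distribution on Σ^r that is shift-stationary at order ≤ n and has full support of its length-(n−1) marginals where needed, and let ρ̃ be its project–lift rollout. Then the Kullback–Leibler divergence admits the exact chain-rule decomposition KL(ρ ‖ ρ̃) = Σ_{t=n+1}^{r} I_ρ(X_t ; X_1^{t−n} | X_{t−n+1}^{t−1}), the sum of the conditional mutual informations (in bits) between the token at position t and the tokens more than n−1 steps in its past, given the intervening n−1 tokens, where (X_1,…,X_r) ∼ ρ. -/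
/-!
Project–lift diagnostics.

Fix a finite alphabet `σ` with `s = |σ| ≥ 2` and integers `r > n ≥ 1`; we write
`n = m + 1` (contexts have length `m = n − 1`) and `r = m + 1 + L` (`L = r − n` is the
hidden extra depth; for `r = n` take `L = 0`).  A distribution `ρ` on `Σ^r` is
shift-stationary at order `≤ n` if all its contiguous length-`n` marginals coincide.
`ngramMarg ρ` is its length-`n` marginal (at offset `0`), `ctxMarg ρ` the induced
length-`(n−1)` marginal, `plContLaw ρ a c = ρ_n(c·a)/ρ_{n−1}(c)` the induced order-`n`
continuation law, and `rollout ρ` the project–lift rollout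
`ρ̃(x_1⋯x_r) = ρ_n(x_1⋯x_n) · ∏_{t=n+1}^r p(x_t | x_{t−n+1}⋯x_{t−1})`.
KL divergences are in bits.
-/

open Finset

variable {σ : Type*}

/-- The length-`len` window at offset `t` of a string of length `r = m + 1 + L`. -/
def win (m L len t : ℕ) (h : t + len ≤ m + 1 + L)
    (x : Fin (m + 1 + L) → σ) : Fin len → σ :=
  fun i => x ⟨t + i.val, by have := i.isLt; omega⟩

/-- The contiguous length-`len` marginal at offset `t` of a distribution on `Σ^r`. -/
noncomputable def marg [Fintype σ] [DecidableEq σ] (m L len t : ℕ)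
    (h : t + len ≤ m + 1 + L) (ρ : (Fin (m + 1 + L) → σ) → ℝ)
    (u : Fin len → σ) : ℝ :=
  ∑ x : Fin (m + 1 + L) → σ, if win m L len t h x = u then ρ x else 0

/-- A distribution on sequences: nonnegative and summing to `1`. -/
def IsDistOn [Fintype σ] [DecidableEq σ] {ι : Type*} [Fintype ι] [DecidableEq ι]
    (ρ : (ι → σ) → ℝ) : Prop :=
  (∀ x, 0 ≤ ρ x) ∧ ∑ x, ρ x = 1

/-- Shift-stationarity at order `≤ n` (`n = m+1`): all contiguous length-`n`
marginals coincide. -/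
def ShiftStationary [Fintype σ] [DecidableEq σ] (m L : ℕ)
    (ρ : (Fin (m + 1 + L) → σ) → ℝ) : Prop :=
  ∀ (t₁ t₂ : ℕ) (h₁ : t₁ + (m + 1) ≤ m + 1 + L) (h₂ : t₂ + (m + 1) ≤ m + 1 + L),
    marg m L (m + 1) t₁ h₁ ρ = marg m L (m + 1) t₂ h₂ ρ

/-- The common length-`n` marginal `ρ_n` (computed at offset `0`). -/
noncomputable def ngramMarg [Fintype σ] [DecidableEq σ] (m L : ℕ)
    (ρ : (Fin (m + 1 + L) → σ) → ℝ) : (Fin (m + 1) → σ) → ℝ :=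
  marg m L (m + 1) 0 (by omega) ρ

/-- The induced length-`(n−1)` (context) marginal `ρ_{n−1}`. -/
noncomputable def ctxMarg [Fintype σ] [DecidableEq σ] (m L : ℕ)
    (ρ : (Fin (m + 1 + L) → σ) → ℝ) (c : Fin m → σ) : ℝ :=
  ∑ a, ngramMarg m L ρ (Fin.snoc c a)

/-- The induced order-`n` continuation law `p(a | c) = ρ_n(c·a)/ρ_{n−1}(c)`. -/
noncomputable def plContLaw [Fintype σ] [DecidableEq σ] (m L : ℕ)
    (ρ : (Fin (m + 1 + L) → σ) → ℝ) (a : σ) (c : Fin m → σ) : ℝ :=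
  ngramMarg m L ρ (Fin.snoc c a) / ctxMarg m L ρ c

/-- The project–lift rollout
`ρ̃(x_1⋯x_r) = ρ_n(x_1⋯x_n) · ∏_{t=n+1}^r p(x_t | x_{t−n+1}⋯x_{t−1})`. -/
noncomputable def rollout [Fintype σ] [DecidableEq σ] (m L : ℕ)
    (ρ : (Fin (m + 1 + L) → σ) → ℝ) : (Fin (m + 1 + L) → σ) → ℝ :=
  fun x =>
    ngramMarg m L ρ (win m L (m + 1) 0 (by omega) x) *
      ∏ t : Fin L,
        plContLaw m L ρ (x ⟨m + 1 + t.val, by have := t.isLt; omega⟩)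
          (win m L m (t.val + 1) (by have := t.isLt; omega) x)

/-- Kullback–Leibler divergence in bits (with the convention `0·log 0 = 0`). -/
noncomputable def klBits {X : Type*} [Fintype X] (μ ν : X → ℝ) : ℝ :=
  ∑ x, μ x * Real.logb 2 (μ x / ν x)

/-- The conditional mutual information (in bits), under `ρ`, between the token
`X_{n+t+1}` and the remote past `X_1^{t+1}`, given the intervening `n − 1` tokens
`X_{t+2}^{n+t}` (`0`-based token index `m+1+t`, `t = 0, …, L−1`), written as the
expected log-ratio
`I(X;Y∣Z) = E_ρ [ log₂ ( p(x,y,z)·p(z) / (p(x,z)·p(y,z)) ) ]` of marginals of `ρ`. -/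
noncomputable def condMutualInfo [Fintype σ] [DecidableEq σ] (m L : ℕ)
    (ρ : (Fin (m + 1 + L) → σ) → ℝ) (t : Fin L) : ℝ :=
  ∑ x : Fin (m + 1 + L) → σ,
    ρ x * Real.logb 2
      ((marg m L (m + 1 + t.val + 1) 0 (by have := t.isLt; omega) ρ
          (win m L (m + 1 + t.val + 1) 0 (by have := t.isLt; omega) x) *
        marg m L m (t.val + 1) (by have := t.isLt; omega) ρ
          (win m L m (t.val + 1) (by have := t.isLt; omega) x)) /
       (marg m L (m + 1 + t.val) 0 (by have := t.isLt; omega) ρ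
          (win m L (m + 1 + t.val) 0 (by have := t.isLt; omega) x) *
        marg m L (m + 1) (t.val + 1) (by have := t.isLt; omega) ρ
          (win m L (m + 1) (t.val + 1) (by have := t.isLt; omega) x)))


section ProjectLiftAux
variable {σ : Type*}

lemma snoc_eq_snoc_iff {n : ℕ} (c u : Fin n → σ) (b a : σ) :
    (Fin.snoc c b : Fin (n+1) → σ) = Fin.snoc u a ↔ c = u ∧ b = a := by
  constructor
  · intro h
    refine ⟨funext fun i => ?_, ?_⟩
    · have := congrFun h i.castSucc; simpa using this
    · have := congrFun h (Fin.last _); simpa using this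
  · rintro ⟨rfl, rfl⟩; rfl

lemma win_snoc (m L len t : ℕ) (h : t + (len + 1) ≤ m + 1 + L) (x : Fin (m + 1 + L) → σ) :
    win m L (len + 1) t h x
      = Fin.snoc (win m L len t (by omega) x) (x ⟨t + len, by omega⟩) := by
  funext i
  rcases lt_or_ge i.val len with hi | hi
  · have : i = Fin.castSucc ⟨i.val, hi⟩ := by ext; rfl
    rw [this, Fin.snoc_castSucc]
    simp [win]
  · have hi' : i.val = len := by have := i.isLt; omega
    have : i = Fin.last len := by ext; simpa using hi'
    rw [this, Fin.snoc_last]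
    simp [win, hi']

lemma win_full (m L : ℕ) (h : 0 + (m + 1 + L) ≤ m + 1 + L) (x : Fin (m + 1 + L) → σ) :
    win m L (m + 1 + L) 0 h x = x := by
  funext i; simp [win]

lemma marg_full [Fintype σ] [DecidableEq σ] (m L : ℕ) (h : 0 + (m + 1 + L) ≤ m + 1 + L)
    (ρ : (Fin (m + 1 + L) → σ) → ℝ) (x : Fin (m + 1 + L) → σ) :
    marg m L (m + 1 + L) 0 h ρ (win m L (m + 1 + L) 0 h x) = ρ x := by
  simp only [marg, win_full]
  simp [Finset.sum_ite_eq' Finset.univ x ρ]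

lemma le_marg [Fintype σ] [DecidableEq σ] (m L len t : ℕ) (h : t + len ≤ m + 1 + L)
    (ρ : (Fin (m + 1 + L) → σ) → ℝ) (hnn : ∀ y, 0 ≤ ρ y) (x : Fin (m + 1 + L) → σ) :
    ρ x ≤ marg m L len t h ρ (win m L len t h x) := by
  classical
  have := Finset.single_le_sum
    (f := fun y => if win m L len t h y = win m L len t h x then ρ y else 0)
    (fun y _ => by split <;> simp [hnn y]) (Finset.mem_univ x)
  simpa [marg] using this

lemma marg_ctx [Fintype σ] [DecidableEq σ] (m L : ℕ) (ρ : (Fin (m + 1 + L) → σ) → ℝ)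
    (hstat : ShiftStationary m L ρ) (t : ℕ) (ht : t + 1 + (m + 1) ≤ m + 1 + L)
    (h : t + 1 + m ≤ m + 1 + L) (u : Fin m → σ) :
    marg m L m (t + 1) h ρ u = ctxMarg m L ρ u := by
  have hn : ∀ a : σ, ngramMarg m L ρ (Fin.snoc u a)
      = marg m L (m + 1) (t + 1) ht ρ (Fin.snoc u a) := by
    intro a
    rw [ngramMarg, hstat 0 (t+1) (by omega) ht]
  rw [ctxMarg]
  simp only [hn, marg]
  rw [Finset.sum_comm]
  refine Finset.sum_congr rfl fun x _ => ?_
  rw [win_snoc m L m (t+1) ht x]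
  by_cases hc : win m L m (t + 1) h x = u
  · simp [snoc_eq_snoc_iff, hc]
  · have : ∀ a : σ, ¬ ((Fin.snoc (win m L m (t+1) (by omega) x) (x ⟨t+1+m, by omega⟩) : Fin (m+1) → σ) = Fin.snoc u a) := by
      intro a hca
      exact hc ((snoc_eq_snoc_iff _ _ _ _).1 hca).1
    simp [this, hc]

/-- Prefix marginal of `x` of length `m+1+k` (capped), as a function of `k`. -/
noncomputable def auxM [Fintype σ] [DecidableEq σ] (m L : ℕ)
    (ρ : (Fin (m + 1 + L) → σ) → ℝ) (x : Fin (m + 1 + L) → σ) (k : ℕ) : ℝ :=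
  if h : k ≤ L then
    marg m L (m + 1 + k) 0 (by omega) ρ (win m L (m + 1 + k) 0 (by omega) x)
  else 1

end ProjectLiftAux

/-- Let `ρ` be a distribution on `Σ^r` (`r = m+1+L > n = m+1`) that
is shift-stationary at order `≤ n` and has full support of its length-`(n−1)`
marginals, and let `ρ̃` be its project–lift rollout.  Then the KL divergence admits
the exact chain-rule decomposition
`KL(ρ ‖ ρ̃) = Σ_{t=n+1}^{r} I_ρ(X_t ; X_1^{t−n} ∣ X_{t−n+1}^{t−1})`,
the sum of the conditional mutual informations (in bits) between the token at
position `t` and the tokens more than `n−1` steps in its past, given the intervening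
`n−1` tokens. -/
theorem kl_eq_sum_condMutualInfo [Fintype σ] [DecidableEq σ]
    (m L : ℕ) (hL : 0 < L) (hs : 2 ≤ Fintype.card σ)
    (ρ : (Fin (m + 1 + L) → σ) → ℝ) (hρ : IsDistOn ρ)
    (hstat : ShiftStationary m L ρ)
    (hfull : ∀ c : Fin m → σ, 0 < ctxMarg m L ρ c) :
    klBits ρ (rollout m L ρ) = ∑ t : Fin L, condMutualInfo m L ρ t := by
    classical
  obtain ⟨hnn, hsum⟩ := hρ
  unfold klBits condMutualInfo
  rw [Finset.sum_comm]
  refine Finset.sum_congr rfl fun x _ => ?_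
  rcases (hnn x).eq_or_lt with h0 | hx
  · simp [← h0]
  rw [← Finset.mul_sum]
  congr 1
  -- positivity of all window marginals of x
  have hpos : ∀ (len t : ℕ) (h : t + len ≤ m + 1 + L),
      0 < marg m L len t h ρ (win m L len t h x) :=
    fun len t h => lt_of_lt_of_le hx (le_marg m L len t h ρ hnn x)
  have hMpos : ∀ k, 0 < auxM m L ρ x k := by
    intro k
    unfold auxM
    split
    · exact hpos _ _ _
    · norm_num
  have hCpos : ∀ t : Fin L, 0 < ctxMarg m L ρ (win m L m (t.val + 1)
      (by have := t.isLt; omega) x) := fun t => hfull _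
  -- identify the prefix marginals with auxM
  have hMk : ∀ t : Fin L,
      marg m L (m + 1 + t.val) 0 (by have := t.isLt; omega) ρ
        (win m L (m + 1 + t.val) 0 (by have := t.isLt; omega) x) = auxM m L ρ x t.val := by
    intro t
    rw [auxM, dif_pos (le_of_lt t.isLt)]
  have hMk1 : ∀ t : Fin L,
      marg m L (m + 1 + t.val + 1) 0 (by have := t.isLt; omega) ρ
        (win m L (m + 1 + t.val + 1) 0 (by have := t.isLt; omega) x)
        = auxM m L ρ x (t.val + 1) := by
    intro t
    rw [auxM, dif_pos (show t.val + 1 ≤ L from t.isLt)]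
    rfl
  have hM0 : ngramMarg m L ρ (win m L (m + 1) 0 (by omega) x) = auxM m L ρ x 0 := by
    rw [auxM, dif_pos (Nat.zero_le L)]
    rfl
  have hML : ρ x = auxM m L ρ x L := by
    rw [auxM, dif_pos (le_refl L), marg_full]
  -- the context marginal in CMI is ctxMarg
  have hC : ∀ t : Fin L,
      marg m L m (t.val + 1) (by have := t.isLt; omega) ρ
        (win m L m (t.val + 1) (by have := t.isLt; omega) x)
        = ctxMarg m L ρ (win m L m (t.val + 1) (by have := t.isLt; omega) x) := by
    intro t
    exact marg_ctx m L ρ hstat t.val (by have := t.isLt; omega) _ _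
  -- the (m+1)-window marginal in CMI is ngramMarg of the snoc
  have hN : ∀ t : Fin L,
      marg m L (m + 1) (t.val + 1) (by have := t.isLt; omega) ρ
        (win m L (m + 1) (t.val + 1) (by have := t.isLt; omega) x)
        = ngramMarg m L ρ (Fin.snoc (win m L m (t.val + 1) (by have := t.isLt; omega) x)
            (x ⟨m + 1 + t.val, by have := t.isLt; omega⟩)) := by
    intro t
    have ht : t.val + 1 + (m + 1) ≤ m + 1 + L := by have := t.isLt; omega
    rw [hstat (t.val + 1) 0 ht (by omega)]
    rw [win_snoc m L m (t.val + 1) ht x]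
    have hx' : x ⟨t.val + 1 + m, by omega⟩ = x ⟨m + 1 + t.val, by have := t.isLt; omega⟩ := by
      congr 1
      simp only [Fin.mk.injEq]
      omega
    rw [hx', ngramMarg]
  have hNpos : ∀ t : Fin L,
      0 < ngramMarg m L ρ (Fin.snoc (win m L m (t.val + 1) (by have := t.isLt; omega) x)
          (x ⟨m + 1 + t.val, by have := t.isLt; omega⟩)) := by
    intro t
    rw [← hN t]
    exact hpos _ _ _
  -- the rollout factors
  have hplc : ∀ t : Fin L,
      plContLaw m L ρ (x ⟨m + 1 + t.val, by have := t.isLt; omega⟩)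
        (win m L m (t.val + 1) (by have := t.isLt; omega) x)
        = ngramMarg m L ρ (Fin.snoc (win m L m (t.val + 1) (by have := t.isLt; omega) x)
            (x ⟨m + 1 + t.val, by have := t.isLt; omega⟩))
          / ctxMarg m L ρ (win m L m (t.val + 1) (by have := t.isLt; omega) x) := by
    intro t
    rfl
  have hplcpos : ∀ t : Fin L,
      0 < plContLaw m L ρ (x ⟨m + 1 + t.val, by have := t.isLt; omega⟩)
        (win m L m (t.val + 1) (by have := t.isLt; omega) x) := by
    intro t
    rw [hplc t]
    exact div_pos (hNpos t) (hCpos t)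
  -- rewrite the left-hand side
  have hroll : rollout m L ρ x = auxM m L ρ x 0 *
      ∏ t : Fin L, plContLaw m L ρ (x ⟨m + 1 + t.val, by have := t.isLt; omega⟩)
        (win m L m (t.val + 1) (by have := t.isLt; omega) x) := by
    rw [rollout, hM0]
  have hrollpos : 0 < rollout m L ρ x := by
    rw [hroll]
    exact mul_pos (hMpos 0) (Finset.prod_pos fun t _ => hplcpos t)
  have hlhs : Real.logb 2 (ρ x / rollout m L ρ x)
      = Real.logb 2 (auxM m L ρ x L) - Real.logb 2 (auxM m L ρ x 0)
        - ∑ t : Fin L,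
          (Real.logb 2 (ngramMarg m L ρ
              (Fin.snoc (win m L m (t.val + 1) (by have := t.isLt; omega) x)
                (x ⟨m + 1 + t.val, by have := t.isLt; omega⟩)))
            - Real.logb 2 (ctxMarg m L ρ (win m L m (t.val + 1)
                (by have := t.isLt; omega) x))) := by
    rw [Real.logb_div (ne_of_gt hx) (ne_of_gt hrollpos), hroll,
      Real.logb_mul (ne_of_gt (hMpos 0))
        (ne_of_gt (Finset.prod_pos fun t _ => hplcpos t)),
      Real.logb_prod _ _ (fun t _ => ne_of_gt (hplcpos t)), hML]
    have : ∀ t : Fin L,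
        Real.logb 2 (plContLaw m L ρ (x ⟨m + 1 + t.val, by have := t.isLt; omega⟩)
          (win m L m (t.val + 1) (by have := t.isLt; omega) x))
        = Real.logb 2 (ngramMarg m L ρ
              (Fin.snoc (win m L m (t.val + 1) (by have := t.isLt; omega) x)
                (x ⟨m + 1 + t.val, by have := t.isLt; omega⟩)))
          - Real.logb 2 (ctxMarg m L ρ (win m L m (t.val + 1)
              (by have := t.isLt; omega) x)) := by
      intro t
      rw [hplc t, Real.logb_div (ne_of_gt (hNpos t)) (ne_of_gt (hCpos t))]
    rw [Finset.sum_congr rfl fun t _ => this t]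
    ring
  rw [hlhs]
  -- rewrite each term of the right-hand side
  have hterm : ∀ t : Fin L,
      Real.logb 2
        ((marg m L (m + 1 + t.val + 1) 0 (by have := t.isLt; omega) ρ
            (win m L (m + 1 + t.val + 1) 0 (by have := t.isLt; omega) x) *
          marg m L m (t.val + 1) (by have := t.isLt; omega) ρ
            (win m L m (t.val + 1) (by have := t.isLt; omega) x)) /
         (marg m L (m + 1 + t.val) 0 (by have := t.isLt; omega) ρ
            (win m L (m + 1 + t.val) 0 (by have := t.isLt; omega) x) *
          marg m L (m + 1) (t.val + 1) (by have := t.isLt; omega) ρ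
            (win m L (m + 1) (t.val + 1) (by have := t.isLt; omega) x)))
      = (Real.logb 2 (auxM m L ρ x (t.val + 1)) - Real.logb 2 (auxM m L ρ x t.val))
        + (Real.logb 2 (ctxMarg m L ρ (win m L m (t.val + 1)
              (by have := t.isLt; omega) x))
          - Real.logb 2 (ngramMarg m L ρ
              (Fin.snoc (win m L m (t.val + 1) (by have := t.isLt; omega) x)
                (x ⟨m + 1 + t.val, by have := t.isLt; omega⟩)))) := by
    intro t
    rw [hMk1 t, hC t, hN t, hMk t,
      Real.logb_div (ne_of_gt (mul_pos (hMpos _) (hCpos t)))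
        (ne_of_gt (mul_pos (hMpos _) (hNpos t))),
      Real.logb_mul (ne_of_gt (hMpos _)) (ne_of_gt (hCpos t)),
      Real.logb_mul (ne_of_gt (hMpos _)) (ne_of_gt (hNpos t))]
    ring
  rw [Finset.sum_congr rfl fun t _ => hterm t, Finset.sum_add_distrib]
  have htel : ∑ t : Fin L,
      (Real.logb 2 (auxM m L ρ x (t.val + 1)) - Real.logb 2 (auxM m L ρ x t.val))
      = Real.logb 2 (auxM m L ρ x L) - Real.logb 2 (auxM m L ρ x 0) := by
    rw [Fin.sum_univ_eq_sum_range
      (fun k => Real.logb 2 (auxM m L ρ x (k + 1)) - Real.logb 2 (auxM m L ρ x k)) L]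
    exact Finset.sum_range_sub (fun k => Real.logb 2 (auxM m L ρ x k)) L
  rw [htel, sub_eq_add_neg, ← Finset.sum_neg_distrib]
  congr 1
  refine Finset.sum_congr rfl fun t _ => ?_
  ring
end

section
/- Let ω be a cyclic de Bruijn word of order n over Σ and let r ≥ n. Then: (i) the s^n cyclic length-r windows of ω are pairwise distinct, so the cyclic window distribution ρ_ω^{(r)} assigns mass s^{−n} to each of them; (ii) every contiguous length-n marginal of ρ_ω^{(r)} is the uniform distribution on Σ^n, so ρ_ω^{(r)} is shift-stationary at order ≤ n and its induced order-n continuation law is p(a | c) = 1/s for every context c ∈ Σ^{n−1} and token a ∈ Σ; (iii) the project–lift rollout of ρ_ω^{(r)} is the uniform distribution on Σ^r. -/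
/-!
Project–lift diagnostics.

Fix a finite alphabet `σ` with `s = |σ| ≥ 2` and integers `r > n ≥ 1`; we write
`n = m + 1` (contexts have length `m = n − 1`) and `r = m + 1 + L` (`L = r − n` is the
hidden extra depth; for `r = n` take `L = 0`).  A distribution `ρ` on `Σ^r` is
shift-stationary at order `≤ n` if all its contiguous length-`n` marginals coincide.
`ngramMarg ρ` is its length-`n` marginal (at offset `0`), `ctxMarg ρ` the induced
length-`(n−1)` marginal, `plContLaw ρ a c = ρ_n(c·a)/ρ_{n−1}(c)` the induced order-`n`
continuation law, and `rollout ρ` the project–lift rollout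
`ρ̃(x_1⋯x_r) = ρ_n(x_1⋯x_n) · ∏_{t=n+1}^r p(x_t | x_{t−n+1}⋯x_{t−1})`.
KL divergences are in bits.
-/

open Finset

variable {σ : Type*}

/-- The distribution `ρ_ω^{(r)}` on `Σ^r` (`r = m+1+L`): uniform on the `s^n` cyclic
length-`r` windows of the cyclic word `ω` of length `s^n` (`n = m+1`), one window
starting at each position `i < s^n`. -/
noncomputable def cyclicWindowDist [Fintype σ] [DecidableEq σ] (m L : ℕ)
    (ω : ℕ → σ) : (Fin (m + 1 + L) → σ) → ℝ :=
  fun g =>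
    (∑ i ∈ Finset.range (Fintype.card σ ^ (m + 1)),
      if ∀ t : Fin (m + 1 + L), ω (i + (t : ℕ)) = g t then (1 : ℝ) else 0) /
      (Fintype.card σ ^ (m + 1) : ℝ)

/-- `ω` is a cyclic de Bruijn word of order `n = m+1`: it has period `s^n` and every
`n`-gram appears exactly once among its `s^n` cyclic length-`n` windows. -/
def IsDeBruijnWord [Fintype σ] [DecidableEq σ] (m : ℕ) (ω : ℕ → σ) : Prop :=
  (∀ i, ω (i + Fintype.card σ ^ (m + 1)) = ω i) ∧
  (∀ g : Fin (m + 1) → σ, ∃! i, i < Fintype.card σ ^ (m + 1) ∧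
    ∀ t : Fin (m + 1), ω (i + (t : ℕ)) = g t)


section Aux
variable {σ : Type*}

lemma sumIndicatorUnique {N : ℕ} {P : ℕ → Prop} [DecidablePred P]
    (h : ∃! i, i < N ∧ P i) :
    ∑ i ∈ Finset.range N, (if P i then (1:ℝ) else 0) = 1 := by
  obtain ⟨i₀, ⟨hi₀N, hP⟩, huniq⟩ := h
  have : ∀ i ∈ Finset.range N, (if P i then (1:ℝ) else 0) = if i = i₀ then 1 else 0 := by
    intro i hi
    rw [Finset.mem_range] at hi
    by_cases hPi : P i
    · simp [hPi, hP, huniq i ⟨hi, hPi⟩]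
    · have : i ≠ i₀ := by rintro rfl; exact hPi hP
      simp [hPi, this]
  rw [Finset.sum_congr rfl this, Finset.sum_ite_eq' (Finset.range N) i₀ (fun _ => (1:ℝ))]
  simp [hi₀N]

lemma omegaMod {N : ℕ} (hN : 0 < N) (ω : ℕ → σ) (hp : ∀ i, ω (i + N) = ω i)
    (x : ℕ) : ω x = ω (x % N) := by
  induction x using Nat.strong_induction_on with
  | _ x ih =>
    by_cases hx : x < N
    · rw [Nat.mod_eq_of_lt hx]
    · have hxN : x - N + N = x := by omega
      calc ω x = ω (x - N + N) := by rw [hxN]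
      _ = ω (x - N) := hp _
      _ = ω ((x - N) % N) := ih _ (by omega)
      _ = ω (x % N) := by rw [← Nat.add_mod_right (x - N) N, hxN]

lemma omegaCong {N : ℕ} (hN : 0 < N) (ω : ℕ → σ) (hp : ∀ i, ω (i + N) = ω i)
    {x y : ℕ} (h : x % N = y % N) : ω x = ω y := by
  rw [omegaMod hN ω hp x, h, ← omegaMod hN ω hp y]

/-- Shifted exists-unique: for each `n`-gram `u` and each shift `t`, there is a unique
`i < s^n` with the window at `i + t` equal to `u`. -/
lemma deBruijnShiftEU [Fintype σ] [DecidableEq σ] (m : ℕ) (ω : ℕ → σ)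
    (hω : IsDeBruijnWord m ω) (hN : 0 < Fintype.card σ ^ (m+1)) (t : ℕ)
    (u : Fin (m+1) → σ) :
    ∃! i, i < Fintype.card σ ^ (m+1) ∧ ∀ k : Fin (m+1), ω (i + t + (k:ℕ)) = u k := by
  set N := Fintype.card σ ^ (m+1) with hNdef
  obtain ⟨j, ⟨hjN, hju⟩, hjuniq⟩ := hω.2 u
  have hcong : ∀ {x y : ℕ}, x % N = y % N → ω x = ω y :=
    fun h => omegaCong hN ω hω.1 h
  refine ⟨(j + (t * N - t)) % N, ⟨Nat.mod_lt _ hN, ?_⟩, ?_⟩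
  · -- existence
    intro k
    refine (hcong ?_).trans (hju k)
    have h1 : ((j + (t * N - t)) % N + t + (k:ℕ)) % N = (j + t * N + (k:ℕ)) % N := by
      conv_lhs => rw [Nat.add_assoc, Nat.mod_add_mod]
      congr 1
      have : t ≤ t * N := Nat.le_mul_of_pos_right t hN
      omega
    rw [h1]
    conv_lhs => rw [Nat.add_right_comm, Nat.add_mul_mod_self_right]
  · -- uniqueness
    intro i ⟨hiN, hiu⟩
    have key : ∀ i', i' < N → (∀ k : Fin (m+1), ω (i' + t + (k:ℕ)) = u k) →
        (i' + t) % N = j := by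
      intro i' _ hi'u
      refine hjuniq _ ⟨Nat.mod_lt _ hN, fun k => ?_⟩
      refine (hcong ?_).trans (hi'u k)
      rw [Nat.mod_add_mod]
    have h1 : (i + t) % N = j := key i hiN hiu
    have h2 : ((j + (t * N - t)) % N + t) % N = j := by
      refine key _ (Nat.mod_lt _ hN) ?_
      intro k
      refine (hcong ?_).trans (hju k)
      rw [Nat.add_assoc, Nat.mod_add_mod]
      have h3 : t ≤ t * N := Nat.le_mul_of_pos_right t hN
      have : j + (t * N - t) + (t + (k:ℕ)) = j + (k:ℕ) + t * N := by omega
      rw [this, Nat.add_mul_mod_self_right]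
    have hmod : (i + t) % N = ((j + (t * N - t)) % N + t) % N := by rw [h1, h2]
    have : i % N = (j + (t * N - t)) % N % N :=
      Nat.ModEq.add_right_cancel' t hmod
    rwa [Nat.mod_mod_of_dvd _ dvd_rfl, Nat.mod_eq_of_lt hiN] at this

/-- Every contiguous length-`n` marginal of the cyclic window distribution is uniform. -/
lemma margCyclic [Fintype σ] [DecidableEq σ] (m L : ℕ) (hs : 2 ≤ Fintype.card σ)
    (ω : ℕ → σ) (hω : IsDeBruijnWord m ω) (t : ℕ) (h : t + (m + 1) ≤ m + 1 + L)
    (u : Fin (m + 1) → σ) :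
    marg m L (m + 1) t h (cyclicWindowDist m L ω) u =
      1 / (Fintype.card σ ^ (m + 1) : ℝ) := by
  set N := Fintype.card σ ^ (m+1) with hNdef
  have hN : 0 < N := Nat.pow_pos (by omega)
  have step1 : ∀ x : Fin (m + 1 + L) → σ,
      (if win m L (m+1) t h x = u then cyclicWindowDist m L ω x else 0) =
      (∑ i ∈ Finset.range N, if (fun t' : Fin (m + 1 + L) => ω (i + (t':ℕ))) = x then
          (if win m L (m+1) t h x = u then (1:ℝ) else 0) else 0) /
        ((Fintype.card σ : ℝ) ^ (m + 1)) := by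
    intro x
    unfold cyclicWindowDist
    by_cases hx : win m L (m+1) t h x = u
    · simp only [hx, if_true]
      congr 1
      refine Finset.sum_congr rfl fun i _ => ?_
      congr 1
      simp [funext_iff]
    · simp [hx]
  unfold marg
  rw [Finset.sum_congr rfl (fun x _ => step1 x), ← Finset.sum_div]
  rw [Finset.sum_comm]
  have step2 : ∀ i ∈ Finset.range N,
      (∑ x : Fin (m+1+L) → σ, if (fun t' : Fin (m + 1 + L) => ω (i + (t':ℕ))) = x then
          (if win m L (m+1) t h x = u then (1:ℝ) else 0) else 0) =
      (if ∀ k : Fin (m+1), ω (i + t + (k:ℕ)) = u k then (1:ℝ) else 0) := by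
    intro i _
    rw [Finset.sum_ite_eq]
    simp only [Finset.mem_univ, if_true]
    congr 1
    unfold win
    simp only [eq_iff_iff, funext_iff]
    constructor
    · intro hh k; have := hh k; simpa [Nat.add_assoc, Nat.add_comm t (k:ℕ), Nat.add_left_comm] using this
    · intro hh k; have := hh k; simpa [Nat.add_assoc, Nat.add_comm t (k:ℕ), Nat.add_left_comm] using this
  rw [Finset.sum_congr rfl step2,
    sumIndicatorUnique (deBruijnShiftEU m ω hω hN t u)]

end Aux

/-- Let `ω` be a cyclic de Bruijn word of order `n = m+1` over `σ`
and let `r = m+1+L ≥ n`.  Then: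
(i) the `s^n` cyclic length-`r` windows of `ω` are pairwise distinct, so the cyclic
window distribution `ρ_ω^{(r)}` assigns mass `s^{−n}` to each of them;
(ii) every contiguous length-`n` marginal of `ρ_ω^{(r)}` is uniform on `Σ^n` — in
particular `ρ_ω^{(r)}` is shift-stationary at order `≤ n` — and its induced order-`n`
continuation law is `p(a|c) = 1/s` for every context `c` and token `a`;
(iii) the project–lift rollout of `ρ_ω^{(r)}` is the uniform distribution on `Σ^r`. -/
theorem deBruijn_cyclicWindowDist_properties [Fintype σ] [DecidableEq σ]
    (m L : ℕ) (hs : 2 ≤ Fintype.card σ) (ω : ℕ → σ) (hω : IsDeBruijnWord m ω) :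
    ((∀ i j, i < Fintype.card σ ^ (m + 1) → j < Fintype.card σ ^ (m + 1) →
        (∀ t : Fin (m + 1 + L), ω (i + (t : ℕ)) = ω (j + (t : ℕ))) → i = j) ∧
      (∀ i, i < Fintype.card σ ^ (m + 1) →
        cyclicWindowDist m L ω (fun t : Fin (m + 1 + L) => ω (i + (t : ℕ))) =
          1 / (Fintype.card σ ^ (m + 1) : ℝ))) ∧
    ((∀ (t : ℕ) (h : t + (m + 1) ≤ m + 1 + L) (u : Fin (m + 1) → σ),
        marg m L (m + 1) t h (cyclicWindowDist m L ω) u =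
          1 / (Fintype.card σ ^ (m + 1) : ℝ)) ∧
      ShiftStationary m L (cyclicWindowDist m L ω) ∧
      (∀ (c : Fin m → σ) (a : σ),
        plContLaw m L (cyclicWindowDist m L ω) a c = 1 / (Fintype.card σ : ℝ))) ∧
    (∀ x : Fin (m + 1 + L) → σ,
      rollout m L (cyclicWindowDist m L ω) x =
        1 / (Fintype.card σ ^ (m + 1 + L) : ℝ)) := by
  classical
  set N := Fintype.card σ ^ (m+1) with hNdef
  have hN : 0 < N := Nat.pow_pos (by omega)
  have hNR : (N : ℝ) ≠ 0 := by positivity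
  have hsR : (Fintype.card σ : ℝ) ≠ 0 := by positivity
  -- (i) distinctness
  have distinct : ∀ i j, i < N → j < N →
      (∀ t : Fin (m + 1 + L), ω (i + (t : ℕ)) = ω (j + (t : ℕ))) → i = j := by
    intro i j hi hj hij
    have h1 : i < N ∧ ∀ t : Fin (m+1), ω (i + (t:ℕ)) = (fun t : Fin (m+1) => ω (j + (t:ℕ))) t := by
      refine ⟨hi, fun t => ?_⟩
      exact hij ⟨t, by omega⟩
    have h2 : j < N ∧ ∀ t : Fin (m+1), ω (j + (t:ℕ)) = (fun t : Fin (m+1) => ω (j + (t:ℕ))) t :=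
      ⟨hj, fun t => rfl⟩
    obtain ⟨k, hk, huniq⟩ := hω.2 (fun t : Fin (m+1) => ω (j + (t:ℕ)))
    rw [huniq i h1, huniq j h2]
  -- (i) mass
  have mass : ∀ i, i < N →
      cyclicWindowDist m L ω (fun t : Fin (m + 1 + L) => ω (i + (t : ℕ))) =
        1 / ((Fintype.card σ : ℝ) ^ (m + 1)) := by
    intro i hi
    unfold cyclicWindowDist
    rw [sumIndicatorUnique (P := fun j => ∀ t : Fin (m+1+L), ω (j + (t:ℕ)) = ω (i + (t:ℕ)))
      ⟨i, ⟨hi, fun t => rfl⟩, fun j ⟨hj1, hj2⟩ => distinct j i hj1 hi hj2⟩]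
  -- (ii) marginals
  have margU : ∀ (t : ℕ) (h : t + (m + 1) ≤ m + 1 + L) (u : Fin (m + 1) → σ),
      marg m L (m + 1) t h (cyclicWindowDist m L ω) u = 1 / ((Fintype.card σ : ℝ) ^ (m + 1)) :=
    fun t h u => margCyclic m L hs ω hω t h u
  have ngramU : ∀ u : Fin (m+1) → σ,
      ngramMarg m L (cyclicWindowDist m L ω) u = 1 / ((Fintype.card σ : ℝ) ^ (m + 1)) :=
    fun u => margU 0 (by omega) u
  have ctxU : ∀ c : Fin m → σ,
      ctxMarg m L (cyclicWindowDist m L ω) c =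
        (Fintype.card σ : ℝ) / ((Fintype.card σ : ℝ) ^ (m + 1)) := by
    intro c
    unfold ctxMarg
    rw [Finset.sum_congr rfl fun a _ => ngramU (Fin.snoc c a), Finset.sum_const,
      Finset.card_univ, nsmul_eq_mul]
    ring
  have contU : ∀ (c : Fin m → σ) (a : σ),
      plContLaw m L (cyclicWindowDist m L ω) a c = 1 / (Fintype.card σ : ℝ) := by
    intro c a
    unfold plContLaw
    rw [ngramU, ctxU]
    field_simp
  refine ⟨⟨distinct, mass⟩, ⟨margU, fun t₁ t₂ h₁ h₂ => ?_, contU⟩, ?_⟩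
  · funext u; rw [margU t₁ h₁ u, margU t₂ h₂ u]
  · intro x
    unfold rollout
    rw [ngramU]
    rw [Finset.prod_congr rfl fun t _ => contU _ _]
    rw [Finset.prod_const]
    simp only [Finset.card_univ, Fintype.card_fin]
    rw [div_pow, one_pow, div_mul_div_comm, one_mul, ← pow_add]
end

section
/- Let ω be a cyclic de Bruijn word of order n over Σ and let r > n. Then the Kullback–Leibler divergence between the cyclic window distribution ρ_ω^{(r)} and its project–lift rollout equals exactly (r − n)·log₂ s bits. Consequently the universal upper bound L·log₂ s (with L = r − n) on the project–lift KL gap is sharp: it is attained by ρ_ω^{(r)}. -/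
/-!
Project–lift diagnostics.

Fix a finite alphabet `σ` with `s = |σ| ≥ 2` and integers `r > n ≥ 1`; we write
`n = m + 1` (contexts have length `m = n − 1`) and `r = m + 1 + L` (`L = r − n` is the
hidden extra depth; for `r = n` take `L = 0`).  A distribution `ρ` on `Σ^r` is
shift-stationary at order `≤ n` if all its contiguous length-`n` marginals coincide.
`ngramMarg ρ` is its length-`n` marginal (at offset `0`), `ctxMarg ρ` the induced
length-`(n−1)` marginal, `plContLaw ρ a c = ρ_n(c·a)/ρ_{n−1}(c)` the induced order-`n`
continuation law, and `rollout ρ` the project–lift rollout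
`ρ̃(x_1⋯x_r) = ρ_n(x_1⋯x_n) · ∏_{t=n+1}^r p(x_t | x_{t−n+1}⋯x_{t−1})`.
KL divergences are in bits.
-/

open Finset

variable {σ : Type*}

namespace DBAux

variable [Fintype σ] [DecidableEq σ]

/-- The cyclic window of length `m+1+L` starting at `i`. -/
def wnd (ω : ℕ → σ) (m L i : ℕ) : Fin (m + 1 + L) → σ := fun t => ω (i + t.val)

lemma cond_iff (ω : ℕ → σ) (m L i : ℕ) (x : Fin (m + 1 + L) → σ) :
    (∀ t : Fin (m + 1 + L), ω (i + (t : ℕ)) = x t) ↔ x = wnd ω m L i := by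
  constructor
  · intro h; funext t; exact (h t).symm
  · rintro rfl t; rfl

lemma uniq {m : ℕ} {ω : ℕ → σ} (hω : IsDeBruijnWord m ω) (L : ℕ)
    (x : Fin (m + 1 + L) → σ) {i j : ℕ} (hi : i < Fintype.card σ ^ (m + 1))
    (hj : j < Fintype.card σ ^ (m + 1))
    (hWi : ∀ t : Fin (m + 1 + L), ω (i + (t : ℕ)) = x t)
    (hWj : ∀ t : Fin (m + 1 + L), ω (j + (t : ℕ)) = x t) : i = j := by
  obtain ⟨k, _, hk⟩ := hω.2 (fun t : Fin (m + 1) => x ⟨t.val, by omega⟩)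
  have h1 : i = k := hk i ⟨hi, fun t => hWi ⟨t.val, by omega⟩⟩
  have h2 : j = k := hk j ⟨hj, fun t => hWj ⟨t.val, by omega⟩⟩
  omega

lemma debruijn_count {m : ℕ} {ω : ℕ → σ} (hω : IsDeBruijnWord m ω)
    (u : Fin (m + 1) → σ) :
    ∑ i ∈ Finset.range (Fintype.card σ ^ (m + 1)),
      (if ∀ t : Fin (m + 1), ω (i + (t : ℕ)) = u t then (1 : ℝ) else 0) = 1 := by
  obtain ⟨k, ⟨hk, hku⟩, huniq⟩ := hω.2 u
  rw [Finset.sum_eq_single_of_mem k (Finset.mem_range.2 hk)]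
  · simp [hku]
  · intro j hj hjk
    rw [if_neg]
    intro hju
    exact hjk (huniq j ⟨Finset.mem_range.1 hj, hju⟩)

lemma rho_eq (m L : ℕ) (ω : ℕ → σ) (x : Fin (m + 1 + L) → σ) :
    cyclicWindowDist m L ω x =
      (((Finset.range (Fintype.card σ ^ (m + 1))).filter
          (fun i => x = wnd ω m L i)).card : ℝ) /
        (Fintype.card σ ^ (m + 1) : ℝ) := by
  unfold cyclicWindowDist
  congr 1
  simp_rw [cond_iff]
  rw [Finset.sum_boole]

lemma rho_values {m : ℕ} {ω : ℕ → σ} (hω : IsDeBruijnWord m ω)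
    (L : ℕ) (x : Fin (m + 1 + L) → σ) :
    cyclicWindowDist m L ω x = 0 ∨
      cyclicWindowDist m L ω x = 1 / (Fintype.card σ ^ (m + 1) : ℝ) := by
  rw [rho_eq]
  have hcard : (((Finset.range (Fintype.card σ ^ (m + 1))).filter
      (fun i => x = wnd ω m L i)).card) ≤ 1 := by
    apply Finset.card_le_one.2
    intro a ha b hb
    simp only [Finset.mem_filter, Finset.mem_range] at ha hb
    exact uniq hω L x ha.1 hb.1 ((cond_iff ω m L a x).2 ha.2)
      ((cond_iff ω m L b x).2 hb.2)
  interval_cases h : (((Finset.range (Fintype.card σ ^ (m + 1))).filter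
      (fun i => x = wnd ω m L i)).card)
  · left; simp
  · right; simp

lemma sum_rho (m L : ℕ) (hs : 2 ≤ Fintype.card σ) (ω : ℕ → σ) :
    ∑ x : Fin (m + 1 + L) → σ, cyclicWindowDist m L ω x = 1 := by
  unfold cyclicWindowDist
  rw [← Finset.sum_div, Finset.sum_comm]
  have h1 : ∀ i ∈ Finset.range (Fintype.card σ ^ (m + 1)),
      ∑ x : Fin (m + 1 + L) → σ,
        (if ∀ t : Fin (m + 1 + L), ω (i + (t : ℕ)) = x t then (1 : ℝ) else 0) = 1 := by
    intro i _
    simp_rw [cond_iff]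
    simp
  rw [Finset.sum_congr rfl h1, Finset.sum_const, Finset.card_range]
  have hN : (0 : ℝ) < (Fintype.card σ ^ (m + 1) : ℝ) := by positivity
  field_simp
  simp [nsmul_eq_mul]

lemma ngramMarg_eq {m : ℕ} {ω : ℕ → σ} (hω : IsDeBruijnWord m ω) (L : ℕ)
    (u : Fin (m + 1) → σ) :
    ngramMarg m L (cyclicWindowDist m L ω) u = 1 / (Fintype.card σ ^ (m + 1) : ℝ) := by
  unfold ngramMarg marg cyclicWindowDist
  have step1 : ∀ x : Fin (m + 1 + L) → σ,
      (if win m L (m + 1) 0 (by omega) x = u then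
        (∑ i ∈ Finset.range (Fintype.card σ ^ (m + 1)),
          if ∀ t : Fin (m + 1 + L), ω (i + (t : ℕ)) = x t then (1 : ℝ) else 0) /
          (Fintype.card σ ^ (m + 1) : ℝ) else 0)
      = (∑ i ∈ Finset.range (Fintype.card σ ^ (m + 1)),
          if x = wnd ω m L i ∧ win m L (m + 1) 0 (by omega) x = u then (1 : ℝ) else 0) /
          (Fintype.card σ ^ (m + 1) : ℝ) := by
    intro x
    by_cases hA : win m L (m + 1) 0 (by omega) x = u
    · simp only [hA, if_true, and_true]
      congr 1
      exact Finset.sum_congr rfl fun i _ => if_congr (cond_iff ω m L i x) rfl rfl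
    · simp only [hA, if_false, and_false, if_false]
      simp
  rw [Finset.sum_congr rfl fun x _ => step1 x, ← Finset.sum_div, Finset.sum_comm]
  have step2 : ∀ i ∈ Finset.range (Fintype.card σ ^ (m + 1)),
      (∑ x : Fin (m + 1 + L) → σ,
        if x = wnd ω m L i ∧ win m L (m + 1) 0 (by omega) x = u then (1 : ℝ) else 0)
      = (if ∀ t : Fin (m + 1), ω (i + (t : ℕ)) = u t then (1 : ℝ) else 0) := by
    intro i _
    rw [Finset.sum_eq_single_of_mem (wnd ω m L i) (Finset.mem_univ _)]
    · have : win m L (m + 1) 0 (by omega) (wnd ω m L i) = u ↔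
          ∀ t : Fin (m + 1), ω (i + (t : ℕ)) = u t := by
        constructor
        · intro h t
          have := congrFun h t
          simpa [win, wnd] using this
        · intro h
          funext t
          simpa [win, wnd] using h t
      simp [this]
    · intro y _ hy
      simp [hy]
  rw [Finset.sum_congr rfl step2, debruijn_count hω u]

lemma ctxMarg_eq {m : ℕ} {ω : ℕ → σ} (hω : IsDeBruijnWord m ω) (L : ℕ)
    (c : Fin m → σ) :
    ctxMarg m L (cyclicWindowDist m L ω) c =
      (Fintype.card σ : ℝ) / (Fintype.card σ ^ (m + 1) : ℝ) := by
  unfold ctxMarg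
  rw [Finset.sum_congr rfl fun a _ => ngramMarg_eq hω L (Fin.snoc c a)]
  rw [Finset.sum_const, Finset.card_univ]
  push_cast
  ring

lemma plContLaw_eq {m : ℕ} {ω : ℕ → σ} (hω : IsDeBruijnWord m ω)
    (hs : 2 ≤ Fintype.card σ) (L : ℕ) (a : σ) (c : Fin m → σ) :
    plContLaw m L (cyclicWindowDist m L ω) a c = 1 / (Fintype.card σ : ℝ) := by
  unfold plContLaw
  rw [ngramMarg_eq hω L, ctxMarg_eq hω L]
  have h1 : (0 : ℝ) < (Fintype.card σ : ℝ) := by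
    have : (0 : ℕ) < Fintype.card σ := by omega
    exact_mod_cast this
  have h2 : (0 : ℝ) < (Fintype.card σ ^ (m + 1) : ℝ) := by positivity
  field_simp

lemma rollout_eq {m : ℕ} {ω : ℕ → σ} (hω : IsDeBruijnWord m ω)
    (hs : 2 ≤ Fintype.card σ) (L : ℕ) (x : Fin (m + 1 + L) → σ) :
    rollout m L (cyclicWindowDist m L ω) x =
      (1 / (Fintype.card σ ^ (m + 1) : ℝ)) * (1 / (Fintype.card σ : ℝ)) ^ L := by
  unfold rollout
  rw [ngramMarg_eq hω L]
  congr 1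
  rw [Finset.prod_congr rfl fun t _ => plContLaw_eq hω hs L _ _]
  simp

end DBAux

/-- Let `ω` be a cyclic de Bruijn word of order `n = m+1` over `σ`
and let `r = m+1+L > n` (so `L = r − n ≥ 1`).  Then the KL divergence between the
cyclic window distribution `ρ_ω^{(r)}` and its project–lift rollout equals exactly
`(r − n)·log₂ s` bits.  Consequently the universal upper bound `L·log₂ s` on the
project–lift KL gap is sharp: it is attained by `ρ_ω^{(r)}`. -/
theorem deBruijn_attains_extremal_kl [Fintype σ] [DecidableEq σ]
    (m L : ℕ) (hL : 0 < L) (hs : 2 ≤ Fintype.card σ)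
    (ω : ℕ → σ) (hω : IsDeBruijnWord m ω) :
    klBits (cyclicWindowDist m L ω) (rollout m L (cyclicWindowDist m L ω)) =
      (L : ℝ) * Real.logb 2 (Fintype.card σ) := by
  have hs0 : (0 : ℝ) < (Fintype.card σ : ℝ) := by
    have : (0 : ℕ) < Fintype.card σ := by omega
    exact_mod_cast this
  have hN0 : (0 : ℝ) < (Fintype.card σ ^ (m + 1) : ℝ) := by positivity
  unfold klBits
  have hterm : ∀ x : Fin (m + 1 + L) → σ,
      cyclicWindowDist m L ω x *
        Real.logb 2 (cyclicWindowDist m L ω x / rollout m L (cyclicWindowDist m L ω) x)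
      = cyclicWindowDist m L ω x * ((L : ℝ) * Real.logb 2 (Fintype.card σ)) := by
    intro x
    rcases DBAux.rho_values hω L x with h | h
    · simp [h]
    · rw [h, DBAux.rollout_eq hω hs L x]
      congr 1
      have hratio : (1 / (Fintype.card σ ^ (m + 1) : ℝ)) /
          ((1 / (Fintype.card σ ^ (m + 1) : ℝ)) * (1 / (Fintype.card σ : ℝ)) ^ L)
          = (Fintype.card σ : ℝ) ^ L := by
        rw [div_pow, one_pow]
        field_simp
      rw [hratio, Real.logb_pow]
  rw [Finset.sum_congr rfl fun x _ => hterm x, ← Finset.sum_mul,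
    DBAux.sum_rho m L hs ω, one_mul]
end

section
/- Let ω be a cyclic de Bruijn word of order n over Σ and let r > n, with L = r − n. Then the total-variation (L¹) distance between the cyclic window distribution ρ_ω^{(r)} and its project–lift rollout satisfies ‖ρ_ω^{(r)} − ρ̃‖₁ = 2(1 − s^{n−r}) = 2(1 − s^{−L}). -/
/-!
Project–lift diagnostics.

Fix a finite alphabet `σ` with `s = |σ| ≥ 2` and integers `r > n ≥ 1`; we write
`n = m + 1` (contexts have length `m = n − 1`) and `r = m + 1 + L` (`L = r − n` is the
hidden extra depth; for `r = n` take `L = 0`).  A distribution `ρ` on `Σ^r` is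
shift-stationary at order `≤ n` if all its contiguous length-`n` marginals coincide.
`ngramMarg ρ` is its length-`n` marginal (at offset `0`), `ctxMarg ρ` the induced
length-`(n−1)` marginal, `plContLaw ρ a c = ρ_n(c·a)/ρ_{n−1}(c)` the induced order-`n`
continuation law, and `rollout ρ` the project–lift rollout
`ρ̃(x_1⋯x_r) = ρ_n(x_1⋯x_n) · ∏_{t=n+1}^r p(x_t | x_{t−n+1}⋯x_{t−1})`.
KL divergences are in bits.
-/

open Finset

variable {σ : Type*}

section AuxDB

variable [Fintype σ] [DecidableEq σ]

/-- the full length-`r` window of `ω` starting at `i`. -/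
private def Wfull (m L : ℕ) (ω : ℕ → σ) (i : ℕ) : Fin (m + 1 + L) → σ :=
  fun t => ω (i + (t : ℕ))

private lemma sum_indicator_ngram (m : ℕ) (ω : ℕ → σ)
    (hω : IsDeBruijnWord m ω) (g : Fin (m + 1) → σ) :
    (∑ i ∈ Finset.range (Fintype.card σ ^ (m + 1)),
      if ∀ t : Fin (m + 1), ω (i + (t : ℕ)) = g t then (1 : ℝ) else 0) = 1 := by
  obtain ⟨i₀, ⟨hi₀, hg⟩, huniq⟩ := hω.2 g
  have : ∀ i ∈ Finset.range (Fintype.card σ ^ (m + 1)),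
      (if ∀ t : Fin (m + 1), ω (i + (t : ℕ)) = g t then (1 : ℝ) else 0) =
      (if i = i₀ then (1 : ℝ) else 0) := by
    intro i hi
    by_cases h : ∀ t : Fin (m + 1), ω (i + (t : ℕ)) = g t
    · simp [huniq i ⟨Finset.mem_range.mp hi, h⟩, hg]
    · have hne : i ≠ i₀ := by rintro rfl; exact h hg
      simp [h, hne]
  rw [Finset.sum_congr rfl this, Finset.sum_ite_eq' (Finset.range _) i₀ (fun _ => (1 : ℝ))]
  simp [hi₀]

private lemma cnt_zero_or_one (m L : ℕ) (ω : ℕ → σ)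
    (hω : IsDeBruijnWord m ω) (x : Fin (m + 1 + L) → σ) :
    (∑ i ∈ Finset.range (Fintype.card σ ^ (m + 1)),
      if ∀ t : Fin (m + 1 + L), ω (i + (t : ℕ)) = x t then (1 : ℝ) else 0) = 0 ∨
    (∑ i ∈ Finset.range (Fintype.card σ ^ (m + 1)),
      if ∀ t : Fin (m + 1 + L), ω (i + (t : ℕ)) = x t then (1 : ℝ) else 0) = 1 := by
  classical
  rw [Finset.sum_boole]
  set F := (Finset.range (Fintype.card σ ^ (m + 1))).filter
      (fun i => ∀ t : Fin (m + 1 + L), ω (i + (t : ℕ)) = x t) with hF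
  have hcard : F.card ≤ 1 := by
    apply Finset.card_le_one.mpr
    intro i hi j hj
    simp only [hF, Finset.mem_filter, Finset.mem_range] at hi hj
    obtain ⟨i₀, _, huniq⟩ := hω.2 (fun t : Fin (m + 1) => x ⟨(t : ℕ), by omega⟩)
    have h1 : i = i₀ := huniq i ⟨hi.1, fun t => hi.2 ⟨(t : ℕ), by omega⟩⟩
    have h2 : j = i₀ := huniq j ⟨hj.1, fun t => hj.2 ⟨(t : ℕ), by omega⟩⟩
    omega
  interval_cases h : F.card
  · left; simp [h]
  · right; simp [h]

private lemma sum_cnt (m L : ℕ) (ω : ℕ → σ) :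
    (∑ x : Fin (m + 1 + L) → σ, ∑ i ∈ Finset.range (Fintype.card σ ^ (m + 1)),
      if ∀ t : Fin (m + 1 + L), ω (i + (t : ℕ)) = x t then (1 : ℝ) else 0) =
      (Fintype.card σ ^ (m + 1) : ℝ) := by
  rw [Finset.sum_comm]
  have : ∀ i ∈ Finset.range (Fintype.card σ ^ (m + 1)),
      (∑ x : Fin (m + 1 + L) → σ,
        if ∀ t : Fin (m + 1 + L), ω (i + (t : ℕ)) = x t then (1 : ℝ) else 0) = 1 := by
    intro i _
    have : ∀ x : Fin (m + 1 + L) → σ,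
        (if ∀ t : Fin (m + 1 + L), ω (i + (t : ℕ)) = x t then (1 : ℝ) else 0) =
        (if Wfull m L ω i = x then (1 : ℝ) else 0) := by
      intro x
      congr 1
      simp [Wfull, funext_iff]
    rw [Finset.sum_congr rfl (fun x _ => this x)]
    rw [Fintype.sum_ite_eq (Wfull m L ω i) (fun _ => (1 : ℝ))]
  rw [Finset.sum_congr rfl this]
  simp

private lemma ngramMarg_db (m L : ℕ) (ω : ℕ → σ)
    (hω : IsDeBruijnWord m ω) (g : Fin (m + 1) → σ) :
    ngramMarg m L (cyclicWindowDist m L ω) g = ((Fintype.card σ : ℝ) ^ (m + 1))⁻¹ := by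
  classical
  set N : ℕ := Fintype.card σ ^ (m + 1) with hN
  unfold ngramMarg marg cyclicWindowDist
  have step1 : ∀ x : Fin (m + 1 + L) → σ,
      (if win m L (m + 1) 0 (by omega) x = g then
        (∑ i ∈ Finset.range N,
          if ∀ t : Fin (m + 1 + L), ω (i + (t : ℕ)) = x t then (1 : ℝ) else 0) /
        ((Fintype.card σ : ℝ) ^ (m + 1))
      else 0) =
      (∑ i ∈ Finset.range N,
        (if win m L (m + 1) 0 (by omega) x = g then (1 : ℝ) else 0) *
        (if ∀ t : Fin (m + 1 + L), ω (i + (t : ℕ)) = x t then (1 : ℝ) else 0)) /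
        ((Fintype.card σ : ℝ) ^ (m + 1)) := by
    intro x
    by_cases h : win m L (m + 1) 0 (by omega) x = g <;> simp [h]
  rw [Finset.sum_congr rfl (fun x _ => step1 x), ← Finset.sum_div, Finset.sum_comm]
  have step2 : ∀ i ∈ Finset.range N,
      (∑ x : Fin (m + 1 + L) → σ,
        (if win m L (m + 1) 0 (by omega) x = g then (1 : ℝ) else 0) *
        (if ∀ t : Fin (m + 1 + L), ω (i + (t : ℕ)) = x t then (1 : ℝ) else 0)) =
      (if ∀ t : Fin (m + 1), ω (i + (t : ℕ)) = g t then (1 : ℝ) else 0) := by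
    intro i _
    have hrw : ∀ x : Fin (m + 1 + L) → σ,
        (if win m L (m + 1) 0 (by omega) x = g then (1 : ℝ) else 0) *
        (if ∀ t : Fin (m + 1 + L), ω (i + (t : ℕ)) = x t then (1 : ℝ) else 0) =
        (if Wfull m L ω i = x then
          (if win m L (m + 1) 0 (by omega) x = g then (1 : ℝ) else 0) else 0) := by
      intro x
      have : (∀ t : Fin (m + 1 + L), ω (i + (t : ℕ)) = x t) ↔ Wfull m L ω i = x := by
        simp [Wfull, funext_iff]
      rw [if_congr this rfl rfl]
      by_cases h : Wfull m L ω i = x <;> simp [h]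
    rw [Finset.sum_congr rfl (fun x _ => hrw x),
      Fintype.sum_ite_eq (Wfull m L ω i)
        (fun x => if win m L (m + 1) 0 (by omega) x = g then (1 : ℝ) else 0)]
    congr 1
    simp only [win, Wfull, funext_iff, eq_iff_iff]
    constructor
    · intro h t; have := h t; simpa using this
    · intro h t; simpa using h t
  rw [Finset.sum_congr rfl step2, sum_indicator_ngram m ω hω g, one_div]

private lemma rollout_db (m L : ℕ) (hs : 2 ≤ Fintype.card σ) (ω : ℕ → σ)
    (hω : IsDeBruijnWord m ω) (x : Fin (m + 1 + L) → σ) :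
    rollout m L (cyclicWindowDist m L ω) x = ((Fintype.card σ : ℝ) ^ (m + 1 + L))⁻¹ := by
  have hs0 : (0 : ℝ) < (Fintype.card σ : ℝ) := by positivity
  have hN0 : (0 : ℝ) < ((Fintype.card σ : ℝ) ^ (m + 1)) := by positivity
  have hctx : ∀ c : Fin m → σ, ctxMarg m L (cyclicWindowDist m L ω) c =
      (Fintype.card σ : ℝ) * ((Fintype.card σ : ℝ) ^ (m + 1))⁻¹ := by
    intro c
    unfold ctxMarg
    rw [Finset.sum_congr rfl (fun a _ => ngramMarg_db m L ω hω (Fin.snoc c a))]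
    simp [mul_comm]
  have hp : ∀ (a : σ) (c : Fin m → σ), plContLaw m L (cyclicWindowDist m L ω) a c =
      ((Fintype.card σ : ℝ))⁻¹ := by
    intro a c
    unfold plContLaw
    rw [ngramMarg_db m L ω hω, hctx]
    field_simp
  unfold rollout
  rw [ngramMarg_db m L ω hω]
  rw [Finset.prod_congr rfl (fun t _ => hp _ _)]
  rw [Finset.prod_const]
  simp only [Finset.card_univ, Fintype.card_fin]
  rw [← inv_pow, ← pow_add, inv_pow]

end AuxDB

/-- Let `ω` be a cyclic de Bruijn word of order `n = m+1` over `σ`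
and let `r = m+1+L > n`, with `L = r − n`.  Then the total-variation (`L¹`) distance
between the cyclic window distribution `ρ_ω^{(r)}` and its project–lift rollout `ρ̃`
satisfies `‖ρ_ω^{(r)} − ρ̃‖₁ = 2(1 − s^{n−r}) = 2(1 − s^{−L})`. -/
theorem deBruijn_l1_gap [Fintype σ] [DecidableEq σ]
    (m L : ℕ) (hL : 0 < L) (hs : 2 ≤ Fintype.card σ)
    (ω : ℕ → σ) (hω : IsDeBruijnWord m ω) :
    ∑ x : Fin (m + 1 + L) → σ,
        |cyclicWindowDist m L ω x - rollout m L (cyclicWindowDist m L ω) x| =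
      2 * (1 - ((Fintype.card σ : ℝ) ^ L)⁻¹) := by
  classical
  have hc0 : (0 : ℝ) < (Fintype.card σ : ℝ) := by
    have : 0 < Fintype.card σ := by omega
    exact_mod_cast this
  have hN0 : (0 : ℝ) < (Fintype.card σ : ℝ) ^ (m + 1) := by positivity
  have hS0 : (0 : ℝ) < (Fintype.card σ : ℝ) ^ (m + 1 + L) := by positivity
  have hvle : ((Fintype.card σ : ℝ) ^ (m + 1 + L))⁻¹ ≤ ((Fintype.card σ : ℝ) ^ (m + 1))⁻¹ := by
    apply inv_anti₀ hN0
    apply pow_le_pow_right₀ (by exact_mod_cast (by omega : 1 ≤ Fintype.card σ)) (by omega)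
  have key : ∀ x : Fin (m + 1 + L) → σ,
      |cyclicWindowDist m L ω x - rollout m L (cyclicWindowDist m L ω) x| =
      (∑ i ∈ Finset.range (Fintype.card σ ^ (m + 1)),
        if ∀ t : Fin (m + 1 + L), ω (i + (t : ℕ)) = x t then (1 : ℝ) else 0) *
        (((Fintype.card σ : ℝ) ^ (m + 1))⁻¹ - ((Fintype.card σ : ℝ) ^ (m + 1 + L))⁻¹) +
      (1 - (∑ i ∈ Finset.range (Fintype.card σ ^ (m + 1)),
        if ∀ t : Fin (m + 1 + L), ω (i + (t : ℕ)) = x t then (1 : ℝ) else 0)) *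
        ((Fintype.card σ : ℝ) ^ (m + 1 + L))⁻¹ := by
    intro x
    rw [rollout_db m L hs ω hω x]
    have hρ : cyclicWindowDist m L ω x = (∑ i ∈ Finset.range (Fintype.card σ ^ (m + 1)),
        if ∀ t : Fin (m + 1 + L), ω (i + (t : ℕ)) = x t then (1 : ℝ) else 0) /
        ((Fintype.card σ : ℝ) ^ (m + 1)) := rfl
    rcases cnt_zero_or_one m L ω hω x with h | h
    · rw [hρ, h, zero_div, zero_sub, abs_neg,
        abs_of_nonneg (inv_nonneg.mpr hS0.le)]
      ring
    · rw [hρ, h]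
      have hle : ((Fintype.card σ : ℝ) ^ (m + 1 + L))⁻¹ ≤
          1 / ((Fintype.card σ : ℝ) ^ (m + 1)) := by
        rw [one_div]; exact hvle
      rw [abs_of_nonneg (sub_nonneg.mpr hle), one_div]
      ring
  rw [Finset.sum_congr rfl (fun x _ => key x), Finset.sum_add_distrib,
    ← Finset.sum_mul, ← Finset.sum_mul, sum_cnt m L ω, Finset.sum_sub_distrib,
    sum_cnt m L ω, Finset.sum_const, Finset.card_univ]
  have hcard : (Fintype.card (Fin (m + 1 + L) → σ) : ℝ) =
      (Fintype.card σ : ℝ) ^ (m + 1 + L) := by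
    rw [Fintype.card_fun, Fintype.card_fin]; push_cast; ring
  rw [nsmul_eq_mul, hcard]
  rw [pow_add]
  have hN : ((Fintype.card σ : ℝ) ^ (m + 1)) ≠ 0 := hN0.ne'
  have hLn : ((Fintype.card σ : ℝ) ^ L) ≠ 0 := by positivity
  field_simp
  ring
end
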